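/- Splicing Euler tours is valid: if E_x is an Euler tour of tree T_x containing vertex x, and E_y an Euler tour of tree T_y rooted at y, with T_x and T_y vertex-disjoint, then inserting the sequence (x, E_y, x) immediately after the first occurrence of x in E_x yields an Euler tour of the tree T obtained from T_x and T_y by adding the edge (x, y). -/

import Mathlib

/-- `E` is an Euler tour of the graph (tree) `T` rooted at `r`, recorded as a sequence
of vertex occurrences: it starts and ends at `r`, and for every ordered pair of
vertices, the corresponding directed traversal occurs exactly once among consecutive
pairs of `E` if the pair is an edge of `T`, and never otherwise (so every edge is
traversed exactly twice, once in each direction). -/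
def IsEulerTour {V : Type*} [DecidableEq V] (T : SimpleGraph V) (r : V)
    (E : List V) : Prop :=
  E.head? = some r ∧ E.getLast? = some r ∧
  (∀ u v : V, T.Adj u v → (E.zip E.tail).count (u, v) = 1) ∧
  (∀ u v : V, ¬ T.Adj u v → (E.zip E.tail).count (u, v) = 0)

lemma count_pairs_append {V : Type*} [DecidableEq V] (P Q : List V)
    (hP : P ≠ []) (hQ : Q ≠ []) (p : V × V) :
    ((P ++ Q).zip (P ++ Q).tail).count p =
      (P.zip P.tail).count p + (Q.zip Q.tail).count p +
        (if p = (P.getLast hP, Q.head hQ) then 1 else 0) := by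
  induction P with
  | nil => exact absurd rfl hP
  | cons a P ih =>
    cases P with
    | nil =>
      cases Q with
      | nil => exact absurd rfl hQ
      | cons b Q => simp [List.count_cons, @eq_comm _ p]
    | cons b P =>
      have := ih (by simp)
      simp only [List.cons_append, List.tail_cons, List.zip_cons_cons,
        List.count_cons, List.getLast_cons (by simp : b :: P ≠ [])] at *
      omega

lemma count_cons' {α : Type*} [DecidableEq α] (p a : α) (l : List α) :
    (a :: l).count p = l.count p + if p = a then 1 else 0 := by
  rcases eq_or_ne p a with rfl | h
  · simp
  · simp [List.count_cons_of_ne h.symm, h]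

lemma ite_eq_comm {α : Type*} [DecidableEq α] (a b : α) :
    (if a = b then (1:ℕ) else 0) = if b = a then 1 else 0 := by
  split_ifs with h1 h2 <;> simp_all

/-- Splicing Euler tours is valid: if `Ex` is an Euler tour of the tree `Tx` (rooted at
`r`) containing the vertex `x`, and `Ey` an Euler tour of the tree `Ty` rooted at `y`,
with `Tx` and `Ty` vertex-disjoint, then inserting the block `(x, Ey, x)` immediately
after the first occurrence of `x` in `Ex` yields an Euler tour of the tree `T` obtained
from `Tx` and `Ty` by adding the edge `(x, y)`. -/
theorem stmt11 {V : Type*} [DecidableEq V] (Tx Ty : SimpleGraph V) (r x y : V)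
    (Ex Ey : List V)
    (hx : IsEulerTour Tx r Ex) (hy : IsEulerTour Ty y Ey)
    (hxm : x ∈ Ex) (hdisj : ∀ v ∈ Ex, v ∉ Ey) :
    IsEulerTour (Tx ⊔ Ty ⊔ SimpleGraph.fromEdgeSet {s(x, y)}) r
      (Ex.takeWhile (· != x) ++ [x] ++ Ey ++ [x] ++ (Ex.dropWhile (· != x)).tail) := by
  obtain ⟨hxh, hxl, hx1, hx0⟩ := hx
  obtain ⟨hyh, hyl, hy1, hy0⟩ := hy
  -- Ey = y :: ty
  obtain ⟨ty, rfl⟩ : ∃ t, Ey = y :: t := by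
    cases Ey with
    | nil => simp at hyh
    | cons a t => simp at hyh; exact ⟨t, by rw [hyh]⟩
  simp only [List.tail_cons] at hy1 hy0
  have hEylast : (y :: ty).getLast (by simp) = y := by
    have := List.getLast?_eq_getLast (l := y :: ty) (by simp)
    rw [this] at hyl; exact Option.some_injective _ hyl
  -- structure of takeWhile/dropWhile
  set A := Ex.takeWhile (· != x) with hA
  set B := Ex.dropWhile (· != x) with hBdef
  have hAB : A ++ B = Ex := List.takeWhile_append_dropWhile (p := (· != x)) (l := Ex)
  have hB_ne : B ≠ [] := by
    intro h
    have := List.dropWhile_eq_nil_iff.mp h x hxm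
    simp at this
  have hBhead : B.head hB_ne = x := by
    have := List.head_dropWhile_not (· != x) (l := Ex) hB_ne
    simpa using this
  have hB : B = x :: B.tail := by
    conv_lhs => rw [← List.cons_head_tail hB_ne, hBhead]
  have hEx : Ex = A ++ (x :: B.tail) := by rw [← hB, hAB]
  -- disjointness facts
  have hyEx : y ∉ Ex := fun h => hdisj y h (by simp)
  have hxEy : x ∉ y :: ty := hdisj x hxm
  have hxy : x ≠ y := by rintro rfl; exact hxEy (by simp)
  have memx : ∀ u v : V, Tx.Adj u v → u ∈ Ex ∧ v ∈ Ex := by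
    intro u v h
    have h1 := hx1 u v h
    have hm : (u, v) ∈ Ex.zip Ex.tail := by
      rw [← List.count_pos_iff]; omega
    obtain ⟨h2, h3⟩ := List.of_mem_zip hm
    exact ⟨h2, List.mem_of_mem_tail h3⟩
  have memy : ∀ u v : V, Ty.Adj u v → u ∈ y :: ty ∧ v ∈ y :: ty := by
    intro u v h
    have h1 := hy1 u v h
    have hm : (u, v) ∈ (y :: ty).zip ty := by
      rw [← List.count_pos_iff]; omega
    obtain ⟨h2, h3⟩ := List.of_mem_zip hm
    exact ⟨h2, List.mem_cons_of_mem y h3⟩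
  have hTxxy : ¬ Tx.Adj x y := fun h => hyEx (memx x y h).2
  have hTxyx : ¬ Tx.Adj y x := fun h => hyEx (memx y x h).1
  have hTyxy : ¬ Ty.Adj x y := fun h => hxEy (memy x y h).1
  have hTyyx : ¬ Ty.Adj y x := fun h => hxEy (memy y x h).2
  -- rewrite the spliced list
  have hGL : A ++ [x] ++ (y :: ty) ++ [x] ++ B.tail
      = A ++ ((x :: y :: ty) ++ (x :: B.tail)) := by simp
  rw [hGL]
  set M := (x :: y :: ty) ++ (x :: B.tail) with hM
  have hM_ne : M ≠ [] := by simp [hM]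
  have keyM : ∀ p : V × V, (M.zip M.tail).count p =
      ((x :: B.tail).zip B.tail).count p +
      ((y :: ty).zip ty).count p +
      (if p = (x, y) then 1 else 0) + (if p = (y, x) then 1 else 0) := by
    intro p
    rw [hM, count_pairs_append (x :: y :: ty) (x :: B.tail) (by simp) (by simp) p]
    simp only [List.getLast_cons (by simp : (y :: ty) ≠ []), hEylast, List.head_cons,
      List.zip_cons_cons, List.tail_cons]
    rcases eq_or_ne p ((x, y) : V × V) with rfl | hp
    · rw [List.count_cons_self, if_pos rfl,
        if_neg (fun h => hxy (congrArg Prod.fst h))]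
      omega
    · rw [List.count_cons_of_ne hp.symm, if_neg hp]
      omega
  have key : ∀ p : V × V, ((A ++ M).zip (A ++ M).tail).count p =
      (Ex.zip Ex.tail).count p + ((y :: ty).zip ty).count p +
      (if p = (x, y) then 1 else 0) + (if p = (y, x) then 1 else 0) := by
    intro p
    rcases eq_or_ne A [] with hA0 | hA0
    · rw [hA0, List.nil_append, keyM p]
      have hEx' : Ex = x :: B.tail := by rw [hEx, hA0, List.nil_append]
      rw [hEx']
      simp only [List.tail_cons]
    · rw [count_pairs_append A M hA0 hM_ne p, keyM p,
        hEx, count_pairs_append A (x :: B.tail) hA0 (by simp) p]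
      have hMh : M.head hM_ne = x := by simp [hM]
      rw [hMh]
      simp only [List.head_cons, List.tail_cons]
      by_cases hc : p = (A.getLast hA0, x) <;> simp only [hc, ↓reduceIte] <;> omega
  refine ⟨?_, ?_, ?_, ?_⟩
  · -- head
    rcases A with _ | ⟨a, A'⟩
    · have : x = r := by
        rw [hEx, List.nil_append] at hxh; simpa using hxh
      simp [hM, this]
    · rw [← hAB] at hxh
      simpa using hxh
  · -- last
    rw [List.getLast?_append_of_ne_nil A hM_ne, hM,
      List.getLast?_append_of_ne_nil (x :: y :: ty) (by simp : (x :: B.tail) ≠ [])]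
    rw [hEx, List.getLast?_append_of_ne_nil A (by simp : (x :: B.tail) ≠ [])] at hxl
    exact hxl
  · -- adjacent pairs counted once
    intro u v hadj
    rw [key (u, v)]
    simp only [SimpleGraph.sup_adj, SimpleGraph.fromEdgeSet_adj,
      Set.mem_singleton_iff, Sym2.eq_iff] at hadj
    rcases hadj with (h | h) | ⟨(⟨rfl, rfl⟩ | ⟨rfl, rfl⟩), hne⟩
    · have e1 := hx1 u v h
      have e2 := hy0 u v (fun h' => hdisj u (memx u v h).1 (memy u v h').1)
      have n1 : (u, v) ≠ (x, y) := by
        rintro ⟨rfl, rfl⟩; exact hyEx (memx _ _ h).2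
      have n2 : (u, v) ≠ (y, x) := by
        rintro ⟨rfl, rfl⟩; exact hyEx (memx _ _ h).1
      simp [e1, e2, n1, n2]
    · have e1 := hx0 u v (fun h' => hdisj u (memx u v h').1 (memy u v h).1)
      have e2 := hy1 u v h
      have n1 : (u, v) ≠ (x, y) := by
        rintro ⟨rfl, rfl⟩; exact hxEy (memy _ _ h).1
      have n2 : (u, v) ≠ (y, x) := by
        rintro ⟨rfl, rfl⟩; exact hxEy (memy _ _ h).2
      simp [e1, e2, n1, n2]
    · have e1 := hx0 _ _ hTxxy
      have e2 := hy0 _ _ hTyxy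
      simp [e1, e2, hxy]
    · have e1 := hx0 _ _ hTxyx
      have e2 := hy0 _ _ hTyyx
      simp [e1, e2, hxy, Ne.symm hxy]
  · -- non-adjacent pairs never occur
    intro u v hadj
    rw [key (u, v)]
    simp only [SimpleGraph.sup_adj, SimpleGraph.fromEdgeSet_adj,
      Set.mem_singleton_iff, Sym2.eq_iff, not_or] at hadj
    obtain ⟨⟨h1, h2⟩, h3⟩ := hadj
    have e1 := hx0 u v h1
    have e2 := hy0 u v h2
    have n1 : (u, v) ≠ (x, y) := by
      rintro ⟨rfl, rfl⟩; exact h3 ⟨Or.inl ⟨rfl, rfl⟩, hxy⟩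
    have n2 : (u, v) ≠ (y, x) := by
      rintro ⟨rfl, rfl⟩; exact h3 ⟨Or.inr ⟨rfl, rfl⟩, Ne.symm hxy⟩
    simp [e1, e2, n1, n2]
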